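/- arXiv:2112.11595 — 2 statements merged into one kernel-verified Lean document; each statement's English description precedes it below -/
import Mathlib

section
/- Let f(z) = z·g(z^{2l+1}) and h(z) = z·g(z)^{2l+1} both be pseudo-involutory, with B-functions B_f and B_h. Then (z·B_h(z)^2) ∘ z^{2l+1} = (z·P_l(z)^2) ∘ (z·B_f(z)^2), where P_l(z) = Σ_{j=0}^{l} ((2l+1)/(2j+1))·C(l+j,2j)·z^j. -/
open PowerSeries

/-- Composition `f ∘ g` of formal power series (meaningful when the constant
coefficient of `g` is zero). -/
noncomputable def comp (f g : PowerSeries ℚ) : PowerSeries ℚ :=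
  PowerSeries.mk fun n =>
    ∑ i ∈ Finset.range (n + 1), (PowerSeries.coeff i f) * (PowerSeries.coeff n (g ^ i))

/-- A formal power series `f` is pseudo-involutory when its compositional
inverse is `-f(-z)`. -/
def PseudoInvolutory (f : PowerSeries ℚ) : Prop :=
  comp f (-(comp f (-X))) = X ∧ comp (-(comp f (-X))) f = X


lemma coeff_comp (f g : PowerSeries ℚ) (n : ℕ) :
    coeff n (comp f g) = ∑ i ∈ Finset.range (n + 1), (coeff i f) * (coeff n (g ^ i)) := by
  simp [comp]

lemma coeff_pow_eq_zero {u : PowerSeries ℚ} (hu : constantCoeff u = 0) {n i : ℕ}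
    (h : n < i) : coeff n (u ^ i) = 0 := by
  have : (X : PowerSeries ℚ) ^ i ∣ u ^ i := pow_dvd_pow_of_dvd (X_dvd_iff.mpr hu) i
  exact X_pow_dvd_iff.mp this n h

lemma coeff_comp_pad (f g : PowerSeries ℚ) (hg : constantCoeff g = 0) {n N : ℕ} (h : n ≤ N) :
    coeff n (comp f g) = ∑ i ∈ Finset.range (N + 1), (coeff i f) * (coeff n (g ^ i)) := by
  rw [coeff_comp]
  apply Finset.sum_subset (Finset.range_subset_range.mpr (by omega))
  intro i hi hni
  simp only [Finset.mem_range] at hi hni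
  rw [coeff_pow_eq_zero hg (by omega), mul_zero]

lemma comp_add (f₁ f₂ g : PowerSeries ℚ) : comp (f₁ + f₂) g = comp f₁ g + comp f₂ g := by
  ext n
  simp [coeff_comp, add_mul, Finset.sum_add_distrib]

lemma comp_sub (f₁ f₂ g : PowerSeries ℚ) : comp (f₁ - f₂) g = comp f₁ g - comp f₂ g := by
  ext n
  simp [coeff_comp, sub_mul, Finset.sum_sub_distrib]

lemma comp_sum {ι : Type*} (t : Finset ι) (F : ι → PowerSeries ℚ) (g : PowerSeries ℚ) :
    comp (∑ i ∈ t, F i) g = ∑ i ∈ t, comp (F i) g := by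
  classical
  induction t using Finset.induction_on with
  | empty =>
    ext n
    rw [coeff_comp]
    simp
  | insert _ _ hnotmem ih =>
    rw [Finset.sum_insert hnotmem, comp_add, ih, Finset.sum_insert hnotmem]

lemma comp_C (c : ℚ) (g : PowerSeries ℚ) : comp (C c) g = C c := by
  ext n
  rw [coeff_comp, Finset.sum_eq_single 0]
  · simp [coeff_zero_eq_constantCoeff]
    rcases Nat.eq_zero_or_pos n with h | h
    · simp [h]
    · simp [coeff_C, Nat.pos_iff_ne_zero.mp h, coeff_one, (Nat.pos_iff_ne_zero.mp h)]
  · intro i _ hi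
    simp [coeff_C, hi]
  · simp

lemma comp_one (g : PowerSeries ℚ) : comp 1 g = 1 := by
  simpa using comp_C 1 g

lemma comp_X {g : PowerSeries ℚ} (hg : constantCoeff g = 0) : comp X g = g := by
  ext n
  rw [coeff_comp, Finset.sum_eq_single 1]
  · simp
  · intro i _ hi
    simp [coeff_X, hi]
  · intro h
    simp only [Finset.mem_range, not_lt] at h
    obtain rfl : n = 0 := by omega
    simp [coeff_zero_eq_constantCoeff, hg]

lemma coeff_comp_trunc (f g : PowerSeries ℚ) (hg : constantCoeff g = 0) {p n : ℕ}
    (h : p ≤ n) :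
    coeff p (comp f g) = coeff p (Polynomial.eval₂ (C) g (trunc (n+1) f)) := by
  rw [coeff_comp_pad f g hg h,
    Polynomial.eval₂_eq_sum_range' (C) (natDegree_trunc_lt f n) g, map_sum]
  apply Finset.sum_congr rfl
  intro i hi
  simp only [Finset.mem_range] at hi
  rw [coeff_trunc, if_pos hi, coeff_C_mul]

lemma coeff_eval₂_eq_zero {g : PowerSeries ℚ} (hg : constantCoeff g = 0)
    {D : Polynomial ℚ} {N n : ℕ} (hD : ∀ i < N, D.coeff i = 0) (hn : n < N) :
    coeff n (Polynomial.eval₂ (C) g D) = 0 := by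
  rw [Polynomial.eval₂_eq_sum, Polynomial.sum, map_sum]
  apply Finset.sum_eq_zero
  intro i hi
  rcases lt_or_ge i N with h | h
  · exact absurd (hD i h) (Polynomial.mem_support_iff.mp hi)
  · rw [coeff_C_mul, coeff_pow_eq_zero hg (by omega), mul_zero]

lemma comp_mul (f₁ f₂ g : PowerSeries ℚ) (hg : constantCoeff g = 0) :
    comp (f₁ * f₂) g = comp f₁ g * comp f₂ g := by
  ext n
  set A := trunc (n+1) f₁ with hA
  set B := trunc (n+1) f₂ with hB
  have key : ∀ i < n + 1, (trunc (n+1) (f₁ * f₂) - A * B).coeff i = 0 := by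
    intro i hi
    rw [Polynomial.coeff_sub, coeff_trunc, if_pos hi, PowerSeries.coeff_mul,
      Polynomial.coeff_mul, sub_eq_zero]
    apply Finset.sum_congr rfl
    intro x hx
    rw [Finset.HasAntidiagonal.mem_antidiagonal] at hx
    rw [hA, hB, coeff_trunc, coeff_trunc, if_pos (by omega), if_pos (by omega)]
  calc coeff n (comp (f₁ * f₂) g)
      = coeff n (Polynomial.eval₂ (C) g (trunc (n+1) (f₁*f₂))) :=
        coeff_comp_trunc _ _ hg le_rfl
    _ = coeff n (Polynomial.eval₂ (C) g (A*B)) := by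
        have : trunc (n+1) (f₁*f₂) = (trunc (n+1) (f₁*f₂) - A*B) + A*B := by ring
        rw [this, Polynomial.eval₂_add, map_add, coeff_eval₂_eq_zero hg key (by omega), zero_add]
    _ = coeff n (Polynomial.eval₂ (C) g A * Polynomial.eval₂ (C) g B) := by
        rw [Polynomial.eval₂_mul]
    _ = coeff n (comp f₁ g * comp f₂ g) := by
        rw [PowerSeries.coeff_mul, PowerSeries.coeff_mul]
        apply Finset.sum_congr rfl
        intro x hx
        rw [Finset.HasAntidiagonal.mem_antidiagonal] at hx
        rw [coeff_comp_trunc f₁ g hg (n := n) (by omega),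
            coeff_comp_trunc f₂ g hg (n := n) (by omega)]

lemma comp_pow (f g : PowerSeries ℚ) (hg : constantCoeff g = 0) (k : ℕ) :
    comp (f ^ k) g = (comp f g) ^ k := by
  induction k with
  | zero => simpa using comp_one g
  | succ k ih => rw [pow_succ, comp_mul _ _ _ hg, ih, pow_succ]

lemma comp_X_pow {g : PowerSeries ℚ} (hg : constantCoeff g = 0) (k : ℕ) :
    comp (X ^ k) g = g ^ k := by
  rw [comp_pow _ _ hg, comp_X hg]

lemma constantCoeff_X_pow_ne {k : ℕ} (hk : 1 ≤ k) :
    constantCoeff ((X : PowerSeries ℚ) ^ k) = 0 := by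
  rw [← coeff_zero_eq_constantCoeff, coeff_X_pow, if_neg (by omega)]

lemma constantCoeff_comp (f g : PowerSeries ℚ) :
    constantCoeff (comp f g) = constantCoeff f := by
  rw [← coeff_zero_eq_constantCoeff_apply, ← coeff_zero_eq_constantCoeff_apply, coeff_comp]
  simp

lemma coeff_comp_X_pow (A : PowerSeries ℚ) {k : ℕ} (hk : 1 ≤ k) (m : ℕ) :
    coeff (k * m) (comp A (X ^ k)) = coeff m A := by
  rw [coeff_comp]
  rw [Finset.sum_eq_single m]
  · rw [← pow_mul, coeff_X_pow, if_pos rfl, mul_one]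
  · intro i _ hi
    rw [← pow_mul, coeff_X_pow, if_neg (by
      intro hh
      exact hi (Nat.eq_of_mul_eq_mul_left (by omega) hh).symm), mul_zero]
  · intro hm
    simp only [Finset.mem_range, not_lt] at hm
    have : m ≤ k * m := Nat.le_mul_of_pos_left m (by omega)
    omega

lemma coeff_comp_X_pow_not_dvd (A : PowerSeries ℚ) {k n : ℕ} (h : ¬ k ∣ n) :
    coeff n (comp A (X ^ k)) = 0 := by
  rw [coeff_comp]
  apply Finset.sum_eq_zero
  intro i _
  rw [← pow_mul, coeff_X_pow, if_neg (fun hh => h ⟨i, hh⟩), mul_zero]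

/-- associativity special case: (A ∘ X^k) ∘ w = A ∘ (w^k) -/
lemma comp_comp_X_pow (A w : PowerSeries ℚ) {k : ℕ} (hk : 1 ≤ k)
    (hw : constantCoeff w = 0) :
    comp (comp A (X ^ k)) w = comp A (w ^ k) := by
  ext n
  rw [coeff_comp, coeff_comp]
  have step : ∀ i ∈ Finset.range (n+1),
      coeff i (comp A (X ^ k)) * coeff n (w ^ i)
      = ∑ t ∈ Finset.range (n+1),
          (if i = k * t then coeff t A * coeff n (w ^ (k*t)) else 0) := by
    intro i hi
    simp only [Finset.mem_range] at hi
    rw [coeff_comp_pad A _ (constantCoeff_X_pow_ne hk) (show i ≤ n by omega),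
      Finset.sum_mul]
    apply Finset.sum_congr rfl
    intro t _
    rw [← pow_mul, coeff_X_pow]
    by_cases hit : i = k * t
    · subst hit; simp
    · simp [hit]
  rw [Finset.sum_congr rfl step, Finset.sum_comm]
  apply Finset.sum_congr rfl
  intro t ht
  rw [Finset.sum_ite_eq' (Finset.range (n+1)) (k*t)
    (fun i => coeff t A * coeff n (w ^ (k*t)))]
  by_cases hkt : k * t ∈ Finset.range (n+1)
  · rw [if_pos hkt, pow_mul]
  · rw [if_neg hkt, ← pow_mul,
      coeff_pow_eq_zero hw (show n < k*t by simpa [Finset.mem_range] using hkt), mul_zero]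

/-- associativity special case: (A ∘ u) ∘ X^k = A ∘ (u ∘ X^k) -/
lemma comp_comp_X_pow' (A u : PowerSeries ℚ) {k : ℕ} (hk : 1 ≤ k)
    (hu : constantCoeff u = 0) :
    comp (comp A u) (X ^ k) = comp A (comp u (X ^ k)) := by
  have hv0 : constantCoeff (comp u (X ^ k)) = 0 := by
    rw [constantCoeff_comp, hu]
  ext n
  by_cases hdvd : k ∣ n
  · obtain ⟨m, rfl⟩ := hdvd
    rw [coeff_comp_X_pow _ hk]
    have hle : m ≤ k * m := Nat.le_mul_of_pos_left m (by omega)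
    rw [coeff_comp_pad A u hu hle, coeff_comp]
    apply Finset.sum_congr rfl
    intro i _
    congr 1
    rw [← comp_pow u _ (constantCoeff_X_pow_ne hk) i, coeff_comp_X_pow _ hk]
  · rw [coeff_comp_X_pow_not_dvd _ hdvd, coeff_comp]
    symm
    apply Finset.sum_eq_zero
    intro i _
    rw [← comp_pow u _ (constantCoeff_X_pow_ne hk) i, coeff_comp_X_pow_not_dvd _ hdvd, mul_zero]

lemma coeff_X_pow_mul_eq_zero {w : PowerSeries ℚ} {j n : ℕ} (h : n < j) :
    coeff n ((X : PowerSeries ℚ) ^ j * w) = 0 :=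
  X_pow_dvd_iff.mp (Dvd.intro w rfl) n h

lemma comp_inj {b : ℕ} (hb : 1 ≤ b) {H : PowerSeries ℚ} (hH : constantCoeff H ≠ 0)
    {A B : PowerSeries ℚ} (hc : comp A (X ^ b * H) = comp B (X ^ b * H)) : A = B := by
  by_contra hne
  have hD : A - B ≠ 0 := sub_ne_zero.mpr hne
  have hex : ∃ n, coeff n (A - B) ≠ 0 := by
    by_contra hno
    push_neg at hno
    exact hD (PowerSeries.ext hno)
  set m := Nat.find hex with hm
  have hms := Nat.find_spec hex
  have hmin : ∀ i < m, coeff i (A - B) = 0 := by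
    intro i hi
    by_contra hcon
    exact absurd (Nat.find_min hex hi) (by simpa using hcon)
  have hs0 : constantCoeff ((X : PowerSeries ℚ) ^ b * H) = 0 := by
    rw [map_mul, ← coeff_zero_eq_constantCoeff, coeff_X_pow, if_neg (by omega)]
    ring
  have hzero : comp (A - B) (X ^ b * H) = 0 := by
    rw [comp_sub, hc, sub_self]
  have hle : m ≤ b * m := Nat.le_mul_of_pos_left m (by omega)
  have := congrArg (coeff (b * m)) hzero
  rw [coeff_comp_pad _ _ hs0 (le_refl (b*m)), map_zero] at this
  rw [Finset.sum_eq_single m] at this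
  · rw [mul_pow, ← pow_mul] at this
    have e : coeff (b*m) ((X : PowerSeries ℚ) ^ (b*m) * H ^ m) = coeff 0 (H ^ m) := by
      have := PowerSeries.coeff_X_pow_mul (H ^ m) (b*m) 0
      simpa using this
    rw [e, coeff_zero_eq_constantCoeff, map_pow] at this
    exact hms (by
      rcases mul_eq_zero.mp this with h | h
      · exact h
      · exact absurd h (pow_ne_zero m hH))
  · intro i hi hne'
    simp only [Finset.mem_range] at hi
    rcases lt_or_gt_of_ne hne' with h | h
    · rw [hmin i h, zero_mul]
    · rw [mul_pow, ← pow_mul, coeff_X_pow_mul_eq_zero (by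
        have : b * m < b * i := Nat.mul_lt_mul_of_le_of_lt (le_refl b) h (by omega)
        omega), mul_zero]
  · intro hmem
    simp only [Finset.mem_range, not_lt] at hmem
    omega


def bQ (l j : ℕ) : ℕ := (l+j+1).choose (2*j+1) + (l+j).choose (2*j+1)

lemma pas {a b : ℕ} (n k : ℕ) (ha : a = n+1) (hb : b = k+1) :
    a.choose b = n.choose k + n.choose (k+1) := by
  subst ha hb; exact Nat.choose_succ_succ' n k

lemma bQ_nat (l j : ℕ) : (2*j+1) * bQ l j = (2*l+1) * (l+j).choose (2*j) := by
  rcases le_or_gt j l with h | h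
  · have h1 : (l+j+1) * (l+j).choose (2*j) = (l+j+1).choose (2*j+1) * (2*j+1) := by
      simpa using Nat.add_one_mul_choose_eq (l+j) (2*j)
    have h2 : (l+j).choose (2*j+1) * (2*j+1) = (l+j).choose (2*j) * (l+j-2*j) := by
      simpa using Nat.choose_succ_right_eq (l+j) (2*j)
    have h3 : l+j-2*j = l-j := by omega
    have h4 : (l+j+1) + (l-j) = 2*l+1 := by omega
    calc (2*j+1) * bQ l j
        = (l+j+1).choose (2*j+1) * (2*j+1) + (l+j).choose (2*j+1) * (2*j+1) := by
          unfold bQ; ring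
      _ = (l+j+1) * (l+j).choose (2*j) + (l+j).choose (2*j) * (l+j-2*j) := by rw [← h1, h2]
      _ = (l+j+1) * (l+j).choose (2*j) + (l-j) * (l+j).choose (2*j) := by
          rw [h3, Nat.mul_comm ((l+j).choose (2*j)) (l-j)]
      _ = (2*l+1) * (l+j).choose (2*j) := by rw [← Nat.add_mul, h4]
  · have z1 : (l+j).choose (2*j) = 0 := Nat.choose_eq_zero_of_lt (by omega)
    have z2 : (l+j+1).choose (2*j+1) = 0 := Nat.choose_eq_zero_of_lt (by omega)
    have z3 : (l+j).choose (2*j+1) = 0 := Nat.choose_eq_zero_of_lt (by omega)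
    simp [bQ, z1, z2, z3]

lemma aQ_eq_bQ (l j : ℕ) : ((2 * (l:ℚ) + 1) / (2 * (j:ℚ) + 1)) * ((l + j).choose (2 * j) : ℚ)
    = (bQ l j : ℚ) := by
  have h := bQ_nat l j
  have h' : ((2*j+1 : ℕ) : ℚ) * (bQ l j : ℚ) = ((2*l+1:ℕ) : ℚ) * ((l+j).choose (2*j) : ℚ) := by
    exact_mod_cast congrArg (Nat.cast : ℕ → ℚ) h
  push_cast at h'
  have hj : (2*(j:ℚ)+1) ≠ 0 := by positivity
  field_simp
  linarith [h']

lemma bQ_zero {l j : ℕ} (h : l < j) : bQ l j = 0 := by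
  have z2 : (l+j+1).choose (2*j+1) = 0 := Nat.choose_eq_zero_of_lt (by omega)
  have z3 : (l+j).choose (2*j+1) = 0 := Nat.choose_eq_zero_of_lt (by omega)
  simp [bQ, z2, z3]

lemma bQ_zero_col (l : ℕ) : bQ l 0 = 2*l+1 := by
  simp [bQ, Nat.choose_one_right]
  omega

lemma bQ_rec (l j : ℕ) : bQ (l+2) (j+1) + bQ l (j+1) = bQ (l+1) j + 2 * bQ (l+1) (j+1) := by
  unfold bQ
  set n := l + j + 1 with hn
  have eA : (l+2+(j+1)+1).choose (2*(j+1)+1) = (n+3).choose (2*j+3) := by congr 1 <;> omega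
  have eB : (l+2+(j+1)).choose (2*(j+1)+1) = (n+2).choose (2*j+3) := by congr 1 <;> omega
  have eC : (l+(j+1)+1).choose (2*(j+1)+1) = (n+1).choose (2*j+3) := by congr 1 <;> omega
  have eD : (l+(j+1)).choose (2*(j+1)+1) = n.choose (2*j+3) := by congr 1 <;> omega
  have eE : (l+1+j+1).choose (2*j+1) = (n+1).choose (2*j+1) := by congr 1 <;> omega
  have eF : (l+1+j).choose (2*j+1) = n.choose (2*j+1) := by congr 1 <;> omega
  have eG : (l+1+(j+1)+1).choose (2*(j+1)+1) = (n+2).choose (2*j+3) := by congr 1 <;> omega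
  have eH : (l+1+(j+1)).choose (2*(j+1)+1) = (n+1).choose (2*j+3) := by congr 1 <;> omega
  have pA : (n+3).choose (2*j+3) = (n+2).choose (2*j+2) + (n+2).choose (2*j+3) :=
    pas (n+2) (2*j+2) (by omega) (by omega)
  have pB : (n+2).choose (2*j+2) = (n+1).choose (2*j+1) + (n+1).choose (2*j+2) :=
    pas (n+1) (2*j+1) (by omega) (by omega)
  have pC : (n+1).choose (2*j+2) = n.choose (2*j+1) + n.choose (2*j+2) :=
    pas n (2*j+1) (by omega) (by omega)
  have pD : (n+1).choose (2*j+3) = n.choose (2*j+2) + n.choose (2*j+3) :=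
    pas n (2*j+2) (by omega) (by omega)
  omega



lemma bQ_11 : bQ 1 1 = 1 := by decide

variable {R : Type*} [CommRing R]

/-- the polynomial `Q_l(x,y) = ∑ bQ l j (xy)^(l-j) (x-y)^(2j)` -/
noncomputable def Qs (x y : R) (l : ℕ) : R :=
  ∑ j ∈ Finset.range (l+1), (bQ l j : R) * (x*y)^(l-j) * ((x-y)^2)^j

lemma Qs_rec (x y : R) (l : ℕ) :
    Qs x y (l+2) + (x*y)^2 * Qs x y l = ((x-y)^2 + 2*(x*y)) * Qs x y (l+1) := by
  set u := x*y
  set v := (x-y)^2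
  have E1 : Qs x y (l+2) =
      (∑ j ∈ Finset.range (l+2), (bQ (l+2) (j+1) : R) * u^(l+1-j) * v^(j+1))
        + (bQ (l+2) 0 : R) * u^(l+2) := by
    rw [Qs, Finset.sum_range_succ']
    congr 1
    · apply Finset.sum_congr rfl
      intro j _
      have e : l+2-(j+1) = l+1-j := by omega
      rw [e]
    · norm_num; rfl
  have E2 : u^2 * Qs x y l =
      (∑ j ∈ Finset.range (l+2), (bQ l (j+1) : R) * u^(l+1-j) * v^(j+1))
        + (bQ l 0 : R) * u^(l+2) := by
    rw [Qs, Finset.mul_sum]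
    have step : ∀ j ∈ Finset.range (l+1),
        u^2 * ((bQ l j : R) * u^(l-j) * v^j) = (bQ l j : R) * u^(l+2-j) * v^j := by
      intro j hj
      simp only [Finset.mem_range] at hj
      rw [show l+2-j = 2+(l-j) by omega, pow_add]
      ring
    rw [Finset.sum_congr rfl step, Finset.sum_range_succ']
    congr 1
    · rw [← Finset.sum_subset (Finset.range_subset_range.mpr (show l ≤ l+2 by omega))]
      apply Finset.sum_congr rfl
      intro j _
      have e : l+2-(j+1) = l+1-j := by omega
      rw [e]
      intro j hj hj2
      simp only [Finset.mem_range] at hj hj2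
      rw [bQ_zero (show l < j+1 by omega)]
      norm_num
    · norm_num
  have E3 : v * Qs x y (l+1) =
      ∑ j ∈ Finset.range (l+2), (bQ (l+1) j : R) * u^(l+1-j) * v^(j+1) := by
    rw [Qs, Finset.mul_sum]
    apply Finset.sum_congr rfl
    intro j _
    ring
  have E4 : 2*u * Qs x y (l+1) =
      (∑ j ∈ Finset.range (l+2), 2 * (bQ (l+1) (j+1) : R) * u^(l+1-j) * v^(j+1))
        + 2 * (bQ (l+1) 0 : R) * u^(l+2) := by
    rw [Qs, Finset.mul_sum]
    have step : ∀ j ∈ Finset.range (l+2),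
        2*u * ((bQ (l+1) j : R) * u^(l+1-j) * v^j)
          = 2 * (bQ (l+1) j : R) * u^(l+2-j) * v^j := by
      intro j hj
      simp only [Finset.mem_range] at hj
      rw [show l+2-j = 1+(l+1-j) by omega, pow_add]
      ring
    rw [Finset.sum_congr rfl step, Finset.sum_range_succ']
    congr 1
    · rw [← Finset.sum_subset (Finset.range_subset_range.mpr (show l+1 ≤ l+2 by omega))]
      apply Finset.sum_congr rfl
      intro j _
      have e : l+2-(j+1) = l+1-j := by omega
      rw [e]
      intro j hj hj2
      simp only [Finset.mem_range] at hj hj2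
      rw [bQ_zero (show l+1 < j+1 by omega)]
      norm_num
    · norm_num
  rw [add_mul, E3]
  rw [E1, E2, E4]
  rw [← add_assoc, add_right_comm]
  have sums : (∑ j ∈ Finset.range (l+2), (bQ (l+2) (j+1) : R) * u^(l+1-j) * v^(j+1))
      + (∑ j ∈ Finset.range (l+2), (bQ l (j+1) : R) * u^(l+1-j) * v^(j+1))
      = (∑ j ∈ Finset.range (l+2), (bQ (l+1) j : R) * u^(l+1-j) * v^(j+1))
      + (∑ j ∈ Finset.range (l+2), 2 * (bQ (l+1) (j+1) : R) * u^(l+1-j) * v^(j+1)) := by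
    rw [← Finset.sum_add_distrib, ← Finset.sum_add_distrib]
    apply Finset.sum_congr rfl
    intro j _
    have := bQ_rec l j
    have cast : ((bQ (l+2) (j+1) : R) + bQ l (j+1)) = (bQ (l+1) j : R) + 2 * bQ (l+1) (j+1) := by
      exact_mod_cast congrArg (Nat.cast : ℕ → R) this
    calc (bQ (l+2) (j+1) : R) * u^(l+1-j) * v^(j+1) + (bQ l (j+1) : R) * u^(l+1-j) * v^(j+1)
        = ((bQ (l+2) (j+1) : R) + bQ l (j+1)) * u^(l+1-j) * v^(j+1) := by ring
      _ = ((bQ (l+1) j : R) + 2 * bQ (l+1) (j+1)) * u^(l+1-j) * v^(j+1) := by rw [cast]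
      _ = _ := by ring
  have consts : ((bQ (l+2) 0 : R)) * u^(l+2) + (bQ l 0 : R) * u^(l+2)
      = 2 * (bQ (l+1) 0 : R) * u^(l+2) := by
    rw [bQ_zero_col, bQ_zero_col, bQ_zero_col]
    push_cast
    ring
  calc _ = ((∑ j ∈ Finset.range (l+2), (bQ (l+2) (j+1) : R) * u^(l+1-j) * v^(j+1))
      + (∑ j ∈ Finset.range (l+2), (bQ l (j+1) : R) * u^(l+1-j) * v^(j+1)))
      + (((bQ (l+2) 0 : R)) * u^(l+2) + (bQ l 0 : R) * u^(l+2)) := by ring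
    _ = _ := by rw [sums, consts]; ring

lemma key_poly (x y : R) : ∀ l : ℕ, (x - y) * Qs x y l = x^(2*l+1) - y^(2*l+1) := by
  have base0 : (x - y) * Qs x y 0 = x^1 - y^1 := by
    simp [Qs, bQ_zero_col]
  have base1 : (x - y) * Qs x y 1 = x^3 - y^3 := by
    have b0 : (bQ 1 0 : R) = 3 := by rw [bQ_zero_col]; norm_num
    have b1 : (bQ 1 1 : R) = 1 := by rw [bQ_11]; norm_num
    rw [Qs]
    rw [Finset.sum_range_succ, Finset.sum_range_one, b0, b1]
    norm_num
    ring
  have main : ∀ l : ℕ, ((x - y) * Qs x y l = x^(2*l+1) - y^(2*l+1))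
      ∧ ((x - y) * Qs x y (l+1) = x^(2*(l+1)+1) - y^(2*(l+1)+1)) := by
    intro l
    induction l with
    | zero => exact ⟨by simpa using base0, by simpa using base1⟩
    | succ l ih =>
      refine ⟨ih.2, ?_⟩
      have h1 := ih.1
      have h2 := ih.2
      have hrec := Qs_rec x y l
      have ea : x^(2*(l+1)+1) = x^(2*l+1) * x^2 := by rw [← pow_add]; ring_nf
      have eb : y^(2*(l+1)+1) = y^(2*l+1) * y^2 := by rw [← pow_add]; ring_nf
      have ec : x^(2*(l+1+1)+1) = x^(2*l+1) * x^4 := by rw [← pow_add]; ring_nf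
      have ed : y^(2*(l+1+1)+1) = y^(2*l+1) * y^4 := by rw [← pow_add]; ring_nf
      rw [ea, eb] at h2
      rw [ec, ed]
      linear_combination (x - y) * hrec - (x*y)^2 * h1 + ((x-y)^2 + 2*(x*y)) * h2
  exact fun l => (main l).1

/-- ("The Twin Powers Theorem", `B`-function part.)  Let
`f(z) = z·g(z^{2l+1})` and `h(z) = z·g(z)^{2l+1}` both be pseudo-involutory,
with `B`-functions `Bf` and `Bh`.  Then
`(z·Bh(z)²) ∘ z^{2l+1} = (z·P_l(z)²) ∘ (z·Bf(z)²)`, where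
`P_l(z) = Σ_{j=0}^{l} ((2l+1)/(2j+1))·C(l+j,2j)·z^j`. -/
theorem twin_powers_B_functions (g f h Bf Bh : PowerSeries ℚ) (l : ℕ)
    (hg0 : PowerSeries.constantCoeff g ≠ 0)
    (hfdef : f = X * comp g (X ^ (2 * l + 1)))
    (hhdef : h = X * g ^ (2 * l + 1))
    (hfpi : PseudoInvolutory f) (hhpi : PseudoInvolutory h)
    (hBf : f - X = X * f * comp Bf (X * f))
    (hBh : h - X = X * h * comp Bh (X * h)) :
    comp (X * Bh ^ 2) (X ^ (2 * l + 1)) =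
      comp
        (X * (∑ j ∈ Finset.range (l + 1),
          PowerSeries.C (((2 * l + 1 : ℚ) / (2 * j + 1)) * ((l + j).choose (2 * j) : ℚ))
            * X ^ j) ^ 2)
        (X * Bf ^ 2) := by
  clear hfpi hhpi
  have hk : 1 ≤ 2*l+1 := by omega
  have hXk0 : constantCoeff ((X:PowerSeries ℚ)^(2*l+1)) = 0 := constantCoeff_X_pow_ne hk
  have hX0 : constantCoeff (X:PowerSeries ℚ) = 0 := constantCoeff_X
  have hs0 : constantCoeff (X*f) = 0 := by simp [hX0]
  have hXh0 : constantCoeff (X*h) = 0 := by simp [hX0]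
  have hU0 : constantCoeff (X*Bf^2) = 0 := by simp [hX0]
  have hG0 : constantCoeff (comp g (X^(2*l+1))) ≠ 0 := by
    rw [constantCoeff_comp]; exact hg0
  have hsX2G : X * f = X^2 * comp g (X^(2*l+1)) := by rw [hfdef]; ring
  -- comp h X^k = f^k
  have hcomph : comp h (X^(2*l+1)) = f^(2*l+1) := by
    rw [hhdef, comp_mul _ _ _ hXk0, comp_X hXk0, comp_pow _ _ hXk0, hfdef, mul_pow]
  -- step 1 : substitute X^(2l+1) into the Bh functional equation
  have H1 : f^(2*l+1) - X^(2*l+1)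
      = X^(2*l+1) * f^(2*l+1) * comp (comp Bh (X^(2*l+1))) (X*f) := by
    have heq := congrArg (fun t => comp t (X^(2*l+1))) hBh
    rw [comp_sub, comp_X hXk0, hcomph] at heq
    rw [comp_mul _ _ _ hXk0, comp_mul _ _ _ hXk0, comp_X hXk0, hcomph] at heq
    rw [comp_comp_X_pow' Bh (X*h) hk hXh0] at heq
    have e1 : comp (X*h) (X^(2*l+1)) = (X*f)^(2*l+1) := by
      rw [comp_mul _ _ _ hXk0, comp_X hXk0, hcomph, mul_pow]
    rw [e1, ← comp_comp_X_pow Bh (X*f) hk hs0] at heq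
    exact heq
  -- step 2: the polynomial identity
  have H3 : (X*f)^(2*l+1) * comp (comp Bh (X^(2*l+1))) (X*f) = (f - X) * Qs f X l := by
    rw [key_poly f X l, H1]
    ring
  -- step 3: expand the right-hand side using the Bf functional equation
  have expand : (f - X) * Qs f X l
      = (X*f)^(l+1) * comp Bf (X*f)
        * ∑ j ∈ Finset.range (l+1),
            (bQ l j : PowerSeries ℚ) * ((X*f) * (comp Bf (X*f))^2)^j := by
    rw [Qs, Finset.mul_sum, Finset.mul_sum]
    apply Finset.sum_congr rfl
    intro j hj
    simp only [Finset.mem_range] at hj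
    rw [hBf]
    rw [show l+1 = (l-j)+(j+1) by omega, pow_add]
    ring
  -- the polynomial P with bQ coefficients
  have cW : comp (X*Bf^2) (X*f) = (X*f) * (comp Bf (X*f))^2 := by
    rw [comp_mul _ _ _ hs0, comp_X hs0, comp_pow _ _ hs0]
  have cPP : comp (∑ j ∈ Finset.range (l+1),
        (bQ l j : PowerSeries ℚ) * (X*Bf^2)^j) (X*f)
      = ∑ j ∈ Finset.range (l+1),
          (bQ l j : PowerSeries ℚ) * ((X*f) * (comp Bf (X*f))^2)^j := by
    rw [comp_sum]
    apply Finset.sum_congr rfl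
    intro j _
    rw [show ((bQ l j : ℕ) : PowerSeries ℚ) = C ((bQ l j : ℕ) : ℚ) from (map_natCast (C) _).symm]
    rw [comp_mul _ _ _ hs0, comp_C, comp_pow _ _ hs0, cW]
  have lhsC : comp (X^(2*l+1) * comp Bh (X^(2*l+1))) (X*f)
      = (X*f)^(2*l+1) * comp (comp Bh (X^(2*l+1))) (X*f) := by
    rw [comp_mul _ _ _ hs0, comp_X_pow hs0]
  have rhsC : comp (X^(l+1) * Bf * (∑ j ∈ Finset.range (l+1),
        (bQ l j : PowerSeries ℚ) * (X*Bf^2)^j)) (X*f)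
      = (X*f)^(l+1) * comp Bf (X*f)
        * ∑ j ∈ Finset.range (l+1),
            (bQ l j : PowerSeries ℚ) * ((X*f) * (comp Bf (X*f))^2)^j := by
    rw [comp_mul _ _ _ hs0, comp_mul _ _ _ hs0, comp_X_pow hs0, cPP]
  have hc : comp (X^(2*l+1) * comp Bh (X^(2*l+1))) (X*f)
      = comp (X^(l+1) * Bf * (∑ j ∈ Finset.range (l+1),
        (bQ l j : PowerSeries ℚ) * (X*Bf^2)^j)) (X*f) := by
    rw [lhsC, rhsC, H3, expand]
  rw [hsX2G] at hc
  have MAIN : X^(2*l+1) * comp Bh (X^(2*l+1))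
      = X^(l+1) * Bf * (∑ j ∈ Finset.range (l+1),
        (bQ l j : PowerSeries ℚ) * (X*Bf^2)^j) :=
    comp_inj (by omega) hG0 hc
  -- now the goal
  have hPser : (∑ j ∈ Finset.range (l + 1),
      PowerSeries.C (((2 * l + 1 : ℚ) / (2 * j + 1)) * ((l + j).choose (2 * j) : ℚ)) * X ^ j)
      = ∑ j ∈ Finset.range (l+1), ((bQ l j : ℕ) : PowerSeries ℚ) * X^j := by
    apply Finset.sum_congr rfl
    intro j _
    congr 1
    rw [aQ_eq_bQ l j, map_natCast]
  rw [hPser]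
  have goalL : comp (X * Bh ^ 2) (X ^ (2 * l + 1))
      = X^(2*l+1) * (comp Bh (X^(2*l+1)))^2 := by
    rw [comp_mul _ _ _ hXk0, comp_X hXk0, comp_pow _ _ hXk0]
  have cP2 : comp (∑ j ∈ Finset.range (l+1), ((bQ l j : ℕ) : PowerSeries ℚ) * X^j) (X*Bf^2)
      = ∑ j ∈ Finset.range (l+1), (bQ l j : PowerSeries ℚ) * (X*Bf^2)^j := by
    rw [comp_sum]
    apply Finset.sum_congr rfl
    intro j _
    rw [show ((bQ l j : ℕ) : PowerSeries ℚ) = C ((bQ l j : ℕ) : ℚ) from (map_natCast (C) _).symm]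
    rw [comp_mul _ _ _ hU0, comp_C, comp_X_pow hU0, map_natCast]
  have goalR : comp (X * (∑ j ∈ Finset.range (l+1),
        ((bQ l j : ℕ) : PowerSeries ℚ) * X^j) ^ 2) (X*Bf^2)
      = (X*Bf^2) * (∑ j ∈ Finset.range (l+1),
        (bQ l j : PowerSeries ℚ) * (X*Bf^2)^j)^2 := by
    rw [comp_mul _ _ _ hU0, comp_X hU0, comp_pow _ _ hU0, cP2]
  rw [goalL, goalR]
  have hXne : ((X:PowerSeries ℚ)^(2*l+1)) ≠ 0 := pow_ne_zero _ X_ne_zero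
  apply mul_left_cancel₀ hXne
  have hp : ((X:PowerSeries ℚ)^(l+1))^2 = X^(2*l+1) * X := by
    rw [← pow_mul, ← pow_succ]
    congr 1
    omega
  calc X^(2*l+1) * (X^(2*l+1) * (comp Bh (X^(2*l+1)))^2)
      = (X^(2*l+1) * comp Bh (X^(2*l+1)))^2 := by ring
    _ = (X^(l+1) * Bf * (∑ j ∈ Finset.range (l+1),
          (bQ l j : PowerSeries ℚ) * (X*Bf^2)^j))^2 := by rw [MAIN]
    _ = X^(2*l+1) * ((X*Bf^2) * (∑ j ∈ Finset.range (l+1),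
          (bQ l j : PowerSeries ℚ) * (X*Bf^2)^j)^2) := by
        rw [mul_pow, mul_pow, hp]
        ring
end

section
/- Extend the k-ary tree generating functions T_n = 1 + z·T_n^n to negative indices via the same functional equation. Then for all n ≥ 0, T_{-n}(z) = 1/T_{n+1}(-z). -/
open PowerSeries

lemma comp_negX (f : PowerSeries ℚ) : comp f (-X) = rescale (-1) f := by
  ext n
  simp only [comp, coeff_mk, coeff_rescale]
  have h : ∀ i, (PowerSeries.coeff n ((-X : PowerSeries ℚ) ^ i))
      = (-1 : ℚ) ^ i * (if n = i then 1 else 0) := by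
    intro i
    have e : ((-X : PowerSeries ℚ)) ^ i = C ((-1 : ℚ) ^ i) * X ^ i := by
      rw [neg_pow, map_pow, map_neg, map_one]
    rw [e, coeff_C_mul, coeff_X_pow]
  rw [Finset.sum_congr rfl (fun i _ => by rw [h i])]
  rw [Finset.sum_eq_single n]
  · simp [mul_comm]
  · intro b _ hb; simp [Ne.symm hb]
  · intro hn; simp at hn

lemma rescale_negX : rescale (-1) (X : PowerSeries ℚ) = -X := by
  ext n
  simp [coeff_rescale, coeff_X]

lemma uniq (n : ℕ) (A D : PowerSeries ℚ)
    (hA0 : PowerSeries.constantCoeff A = 1)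
    (hD0 : PowerSeries.constantCoeff D = 1)
    (hA : A ^ (n + 1) = A ^ n + X)
    (hD : D ^ (n + 1) = D ^ n + X) : A = D := by
  have key : ((∑ i ∈ Finset.range (n+1), A ^ i * D ^ (n - i))
      - ∑ i ∈ Finset.range n, A ^ i * D ^ (n - 1 - i)) * (A - D) = 0 := by
    rw [sub_mul]
    have g1 := geom_sum₂_mul A D (n+1)
    have g2 := geom_sum₂_mul A D n
    simp only [Nat.add_sub_cancel] at g1
    rw [g1, g2, hA, hD]
    ring
  have hfac : PowerSeries.constantCoeff ((∑ i ∈ Finset.range (n+1), A ^ i * D ^ (n - i))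
      - ∑ i ∈ Finset.range n, A ^ i * D ^ (n - 1 - i)) = 1 := by
    simp [map_sub, map_sum, map_mul, map_pow, hA0, hD0]
  rcases mul_eq_zero.mp key with h | h
  · exfalso
    rw [h, map_zero] at hfac
    exact zero_ne_one hfac
  · exact sub_eq_zero.mp h

/-- Extend the `k`-ary tree generating functions `T_n = 1 + z·T_n^n` to
negative indices via the same functional equation:  if `A(0) = 1` and
`A^{n+1} = A^n + z` (the equation `A = 1 + z·A^{-n}` cleared of negative
powers, so `A = T_{-n}`), and `B = 1 + z·B^{n+1}` (so `B = T_{n+1}`), then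
`T_{-n}(z) = 1/T_{n+1}(-z)`, i.e. `A = (B(-z))⁻¹`. -/
theorem negative_index_kary_trees (n : ℕ) (A B : PowerSeries ℚ)
    (hA0 : PowerSeries.constantCoeff A = 1)
    (hA : A ^ (n + 1) = A ^ n + X)
    (hB : B = 1 + X * B ^ (n + 1)) :
    A = (comp B (-X))⁻¹ := by
  set C := comp B (-X) with hCdef
  have hC : C = 1 + (-X) * C ^ (n + 1) := by
    rw [hCdef, comp_negX]
    conv_lhs => rw [hB]
    rw [map_add, map_one, map_mul, map_pow, rescale_negX]
  have hC0 : PowerSeries.constantCoeff C = 1 := by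
    rw [hC]; simp
  have hC0' : PowerSeries.constantCoeff C ≠ 0 := by rw [hC0]; exact one_ne_zero
  have hCD : C * C⁻¹ = 1 := PowerSeries.mul_inv_cancel C hC0'
  have hD0 : PowerSeries.constantCoeff C⁻¹ = 1 := by
    rw [PowerSeries.constantCoeff_inv, hC0, inv_one]
  have hDn : (C⁻¹) ^ (n + 1) = (C⁻¹) ^ n + X := by
    have h1 : C * (C⁻¹) ^ (n + 1) = (C⁻¹) ^ n := by
      rw [pow_succ', ← mul_assoc, hCD, one_mul]
    have hpow : C ^ (n + 1) * (C⁻¹) ^ (n + 1) = 1 := by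
      rw [← mul_pow, hCD, one_pow]
    linear_combination h1 - (C⁻¹) ^ (n + 1) * hC + X * hpow
  exact uniq n A C⁻¹ hA0 hD0 hA hDn
end
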